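/- Let l, m ≥ 1, k = l+m, 0 ≤ a ≤ m, b = n - m + a, n ≥ k, 1 ≤ r ≤ d ≤ l, and let i_1,...,i_d satisfy a+1 ≤ i_j ≤ b for all j ≠ r and 1 ≤ i_r ≤ a. Then the number of permutations in S_n avoiding σ^a P_{l,m} whose first d values are i_1,...,i_d equals the number of permutations in S_{n-1} avoiding σ^a P_{l,m} whose first d-1 values are i_1-1,...,i_{r-1}-1, i_{r+1}-1,...,i_d-1. -/

import Mathlib

open Finset Equiv

/-- `π` contains the pattern `τ`: some increasing subsequence of `π` is
order-isomorphic to `τ`. -/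
def PContains {k n : ℕ} (τ : Equiv.Perm (Fin k)) (π : Equiv.Perm (Fin n)) : Prop :=
  ∃ f : Fin k ↪o Fin n, ∀ i j : Fin k, τ i < τ j ↔ π (f i) < π (f j)

/-- `π` avoids every pattern in `T`. -/
def PAvoids {k n : ℕ} (π : Equiv.Perm (Fin n)) (T : Set (Equiv.Perm (Fin k))) : Prop :=
  ∀ τ ∈ T, ¬ PContains τ π

/-- The coset `σ^a P_{l,m}` of the maximal parabolic subgroup of `S_k` (`k = l+m`):
`τ ∈ σ^a P_{l,m}` iff the first `l` (1-based) values of `τ` are a permutation of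
`{a+1, ..., a+l}` taken modulo `k` (in 0-based terms: `(τ j - a) mod k < l`). -/
def sigmaP (k l a : ℕ) : Set (Equiv.Perm (Fin k)) :=
  {τ | ∀ j : Fin k, (j : ℕ) < l → ((τ j : ℕ) + k - a) % k < l}

/-- The number of permutations of `S_n` avoiding every pattern in `T ⊆ S_k`. -/
noncomputable def avoidersCard (k : ℕ) (T : Set (Equiv.Perm (Fin k))) (n : ℕ) : ℕ :=
  {π : Equiv.Perm (Fin n) | PAvoids π T}.ncard

/-- `g_n(i_1,...,i_d)`: the number of permutations in `S_n` avoiding `σ^a P_{l,m}`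
whose value at (1-based) position `p` equals `i p` for `1 ≤ p ≤ d` (values 1-based). -/
noncomputable def gCount (l m a n d : ℕ) (i : ℕ → ℕ) : ℕ :=
  {π : Equiv.Perm (Fin n) | PAvoids π (sigmaP (l + m) l a) ∧
    ∀ j : Fin n, (j : ℕ) < d → (π j : ℕ) + 1 = i ((j : ℕ) + 1)}.ncard

/-- `A(n,d) = ∑ g_n(i_1,...,i_d)` over all `a+1 ≤ i_1, ..., i_d ≤ b` with `b = n-m+a`. -/
noncomputable def ACount (l m a n d : ℕ) : ℕ :=
  ∑ iv ∈ Fintype.piFinset (fun _ : Fin d => Finset.Icc (a + 1) (n - m + a)),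
    gCount l m a n d (fun p => if h : p - 1 < d then iv ⟨p - 1, h⟩ else 0)

namespace DelAux

variable {N : ℕ}

/-- Delete the entry at position `p0` from a permutation of `Fin (N+1)`. -/
def delAt (p0 : Fin (N + 1)) (π : Equiv.Perm (Fin (N + 1))) : Equiv.Perm (Fin N) :=
  Equiv.removeNone (((finSuccEquiv' p0).symm.trans π).trans (finSuccEquiv' (π p0)))

lemma delAt_spec (p0 : Fin (N + 1)) (π : Equiv.Perm (Fin (N + 1))) (j : Fin N) :
    π (p0.succAbove j) = (π p0).succAbove (delAt p0 π j) := by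
  set e := ((finSuccEquiv' p0).symm.trans π).trans (finSuccEquiv' (π p0)) with he
  have h1 : e (some j) = finSuccEquiv' (π p0) (π (p0.succAbove j)) := by
    simp [he]
  have hne : π (p0.succAbove j) ≠ π p0 := fun h => Fin.succAbove_ne p0 j (π.injective h)
  obtain ⟨y, hy⟩ : ∃ y, finSuccEquiv' (π p0) (π (p0.succAbove j)) = some y := by
    rcases h : finSuccEquiv' (π p0) (π (p0.succAbove j)) with _ | y
    · exact absurd ((finSuccEquiv' (π p0)).injective
        (h.trans (finSuccEquiv'_at _).symm)) hne
    · exact ⟨y, rfl⟩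
  have h2 : some (delAt p0 π j) = finSuccEquiv' (π p0) (π (p0.succAbove j)) :=
    (Equiv.removeNone_some e ⟨y, h1.trans hy⟩).trans h1
  have h3 := congrArg (finSuccEquiv' (π p0)).symm h2
  simpa using h3.symm

/-- Insert value `v0` at position `p0`. -/
def insAt (p0 v0 : Fin (N + 1)) (π' : Equiv.Perm (Fin N)) : Equiv.Perm (Fin (N + 1)) :=
  ((finSuccEquiv' p0).trans (Equiv.optionCongr π')).trans (finSuccEquiv' v0).symm

lemma insAt_at (p0 v0 : Fin (N + 1)) (π' : Equiv.Perm (Fin N)) : insAt p0 v0 π' p0 = v0 := by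
  simp [insAt]

lemma insAt_succAbove (p0 v0 : Fin (N + 1)) (π' : Equiv.Perm (Fin N)) (j : Fin N) :
    insAt p0 v0 π' (p0.succAbove j) = v0.succAbove (π' j) := by
  simp [insAt]

lemma delAt_insAt (p0 v0 : Fin (N + 1)) (π' : Equiv.Perm (Fin N)) :
    delAt p0 (insAt p0 v0 π') = π' := by
  apply Equiv.ext
  intro j
  have h := delAt_spec p0 (insAt p0 v0 π') j
  rw [insAt_at, insAt_succAbove] at h
  exact (Fin.succAbove_right_injective h).symm

lemma insAt_delAt (p0 v0 : Fin (N + 1)) (π : Equiv.Perm (Fin (N + 1))) (hp : π p0 = v0) :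
    insAt p0 v0 (delAt p0 π) = π := by
  apply Equiv.ext
  intro x
  rcases eq_or_ne x p0 with h | hx
  · rw [h, insAt_at, hp]
  · obtain ⟨j, rfl⟩ := Fin.exists_succAbove_eq hx
    rw [insAt_succAbove, ← hp, ← delAt_spec]

lemma coe_succAbove (p : Fin (N + 1)) (x : Fin N) :
    (p.succAbove x : ℕ) = if (x : ℕ) < (p : ℕ) then (x : ℕ) else (x : ℕ) + 1 := by
  rcases lt_or_ge ((x : ℕ)) ((p : ℕ)) with h | h
  · rw [Fin.succAbove_of_castSucc_lt _ _ (by simpa [Fin.lt_def] using h), if_pos h]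
    simp
  · rw [Fin.succAbove_of_le_castSucc _ _ (by simpa [Fin.le_def] using h), if_neg (by omega)]
    simp

lemma le_apply {k M : ℕ} (f : Fin k ↪o Fin M) (t : Fin k) : (t : ℕ) ≤ (f t : ℕ) := by
  suffices h : ∀ u : ℕ, ∀ t : Fin k, (t : ℕ) = u → u ≤ (f t : ℕ) from h _ t rfl
  intro u
  induction u with
  | zero => omega
  | succ v ih =>
    intro t ht
    have hv : v < k := by omega
    have h1 : v ≤ (f ⟨v, hv⟩ : ℕ) := ih ⟨v, hv⟩ rfl
    have h2 : f ⟨v, hv⟩ < f t := f.strictMono (by rw [Fin.lt_def]; simp; omega)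
    rw [Fin.lt_def] at h2
    omega

lemma avoids_delAt {k : ℕ} (T : Set (Equiv.Perm (Fin k))) (p0 : Fin (N + 1))
    (π : Equiv.Perm (Fin (N + 1))) (h : PAvoids π T) : PAvoids (delAt p0 π) T := by
  rintro τ hτ ⟨f, hf⟩
  refine h τ hτ ⟨f.trans p0.succAboveOrderEmb, fun s t => ?_⟩
  rw [hf s t]
  show _ ↔ π (p0.succAbove (f s)) < π (p0.succAbove (f t))
  rw [delAt_spec p0 π (f s), delAt_spec p0 π (f t), Fin.succAbove_lt_succAbove_iff]

lemma avoids_of_delAt (l m a : ℕ) (ha : a ≤ m) (p0 : Fin (N + 1))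
    (π : Equiv.Perm (Fin (N + 1))) (hp : (p0 : ℕ) < l) (hv : (π p0 : ℕ) < a)
    (h : PAvoids (delAt p0 π) (sigmaP (l + m) l a)) : PAvoids π (sigmaP (l + m) l a) := by
  rintro τ hτ ⟨f, hf⟩
  by_cases hcase : ∃ t, f t = p0
  · obtain ⟨t, ht⟩ := hcase
    have htl : (t : ℕ) < l := by
      have := le_apply f t
      rw [ht] at this
      omega
    have hτt := hτ t htl
    have hτtk : (τ t : ℕ) < l + m := (τ t).isLt
    have haτ : a ≤ (τ t : ℕ) := by
      by_contra hlt
      push_neg at hlt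
      rw [Nat.mod_eq_of_lt (by omega)] at hτt
      omega
    have hcard1 : (Finset.univ.filter (fun j : Fin (l + m) => τ j < τ t)).card = (τ t : ℕ) := by
      rw [← Fin.card_Iio (τ t)]
      apply Finset.card_nbij' (i := fun j => τ j) (j := fun y => τ.symm y)
      · intro x hx
        simp only [Finset.mem_coe, Finset.mem_filter, Finset.mem_univ, true_and] at hx
        simpa using hx
      · intro y hy
        simp only [Finset.mem_coe, Finset.mem_Iio] at hy
        simp [hy]
      · intro x _; simp
      · intro y _; simp
    have hsub : ∀ j ∈ Finset.univ.filter (fun j : Fin (l + m) => τ j < τ t),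
        π (f j) ∈ Finset.Iio (π p0) := by
      intro j hj
      simp only [Finset.mem_filter, Finset.mem_univ, true_and] at hj
      simp only [Finset.mem_Iio]
      rw [← ht, ← hf]
      exact hj
    have hinj : Set.InjOn (fun j => π (f j))
        ↑(Finset.univ.filter (fun j : Fin (l + m) => τ j < τ t)) := by
      intro x _ y _ hxy
      exact f.injective (π.injective hxy)
    have hle := Finset.card_le_card_of_injOn _ hsub hinj
    rw [hcard1, Fin.card_Iio] at hle
    omega
  · push_neg at hcase
    choose g hg using fun t => Fin.exists_succAbove_eq (hcase t)
    refine h τ hτ ⟨OrderEmbedding.ofStrictMono g ?_, fun s t => ?_⟩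
    · intro s t hst
      have h2 : p0.succAbove (g s) < p0.succAbove (g t) := by
        rw [hg, hg]; exact f.strictMono hst
      exact Fin.succAbove_lt_succAbove_iff.mp h2
    · rw [hf s t]
      show π (f s) < π (f t) ↔ delAt p0 π (g s) < delAt p0 π (g t)
      rw [← hg s, ← hg t, delAt_spec, delAt_spec, Fin.succAbove_lt_succAbove_iff]

end DelAux

open DelAux

theorem gCount_delete_small (l m a n d r : ℕ) (hl : 1 ≤ l) (hm : 1 ≤ m)
    (ha : a ≤ m) (hn : l + m ≤ n) (hr : 1 ≤ r) (hrd : r ≤ d) (hdl : d ≤ l)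
    (i : ℕ → ℕ)
    (hi : ∀ j, 1 ≤ j → j ≤ d → j ≠ r → a + 1 ≤ i j ∧ i j ≤ n - m + a)
    (hir : 1 ≤ i r) (hir' : i r ≤ a) :
    gCount l m a n d i
      = gCount l m a (n - 1) (d - 1)
          (fun p => if p < r then i p - 1 else i (p + 1) - 1) := by
  obtain ⟨N, rfl⟩ : ∃ N, n = N + 1 := ⟨n - 1, by omega⟩
  have hra : 1 ≤ a := le_trans hir hir'
  have hp0 : r - 1 < N + 1 := by omega
  have hv0 : i r - 1 < N + 1 := by omega
  set p0 : Fin (N + 1) := ⟨r - 1, hp0⟩ with hp0def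
  set v0 : Fin (N + 1) := ⟨i r - 1, hv0⟩ with hv0def
  have hp0c : (p0 : ℕ) = r - 1 := rfl
  have hv0c : (v0 : ℕ) = i r - 1 := rfl
  set S : Set (Equiv.Perm (Fin (N + 1))) :=
    {π | PAvoids π (sigmaP (l + m) l a) ∧
      ∀ j : Fin (N + 1), (j : ℕ) < d → (π j : ℕ) + 1 = i ((j : ℕ) + 1)} with hS
  set T : Set (Equiv.Perm (Fin N)) :=
    {π | PAvoids π (sigmaP (l + m) l a) ∧
      ∀ j : Fin N, (j : ℕ) < d - 1 → (π j : ℕ) + 1 =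
        (fun p => if p < r then i p - 1 else i (p + 1) - 1) ((j : ℕ) + 1)} with hT
  have hmapsF : Set.MapsTo (delAt p0) S T := by
    rintro π ⟨hav, hval⟩
    have hπp0 : π p0 = v0 := by
      have h1 := hval p0 (by rw [hp0c]; omega)
      apply Fin.ext
      rw [hp0c, show r - 1 + 1 = r by omega] at h1
      rw [hv0c]
      omega
    constructor
    · exact avoids_delAt _ _ _ hav
    · intro j' hj'
      have hspec := delAt_spec p0 π j'
      rw [hπp0] at hspec
      have hjc : ((p0.succAbove j' : Fin (N + 1)) : ℕ)
          = if (j' : ℕ) < r - 1 then (j' : ℕ) else (j' : ℕ) + 1 := coe_succAbove p0 j'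
      have hvc : ((v0.succAbove (delAt p0 π j') : Fin (N + 1)) : ℕ)
          = if ((delAt p0 π j' : Fin N) : ℕ) < i r - 1 then ((delAt p0 π j' : Fin N) : ℕ)
            else ((delAt p0 π j' : Fin N) : ℕ) + 1 := coe_succAbove v0 _
      have hπval := congrArg Fin.val hspec
      show ((delAt p0 π j' : Fin N) : ℕ) + 1
          = if (j' : ℕ) + 1 < r then i ((j' : ℕ) + 1) - 1 else i ((j' : ℕ) + 1 + 1) - 1
      by_cases hc : (j' : ℕ) < r - 1
      · have hd : ((p0.succAbove j' : Fin (N + 1)) : ℕ) < d := by rw [hjc, if_pos hc]; omega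
        have h2 := hval _ hd
        rw [hjc] at h2
        rw [if_pos hc] at h2
        have hlow := (hi ((j' : ℕ) + 1) (by omega) (by omega) (by omega)).1
        rw [if_pos (by omega : (j' : ℕ) + 1 < r)]
        rw [hvc] at hπval
        split at hπval <;> omega
      · have hd : ((p0.succAbove j' : Fin (N + 1)) : ℕ) < d := by rw [hjc, if_neg hc]; omega
        have h2 := hval _ hd
        rw [hjc] at h2
        rw [if_neg hc] at h2
        have hlow := (hi ((j' : ℕ) + 1 + 1) (by omega) (by omega) (by omega)).1
        rw [if_neg (by omega : ¬ ((j' : ℕ) + 1 < r))]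
        rw [hvc] at hπval
        split at hπval <;> omega
  have hmapsG : Set.MapsTo (insAt p0 v0) T S := by
    rintro π' ⟨hav', hval'⟩
    constructor
    · apply avoids_of_delAt l m a ha p0 _ (by rw [hp0c]; omega)
        (by rw [insAt_at, hv0c]; omega)
      rw [delAt_insAt]
      exact hav'
    · intro j hj
      rcases eq_or_ne j p0 with hjp | hjp
      · rw [hjp, insAt_at]
        rw [hv0c, hp0c, show r - 1 + 1 = r by omega]
        omega
      · obtain ⟨j', rfl⟩ := Fin.exists_succAbove_eq hjp
        rw [insAt_succAbove]
        have hjc : ((p0.succAbove j' : Fin (N + 1)) : ℕ)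
            = if (j' : ℕ) < r - 1 then (j' : ℕ) else (j' : ℕ) + 1 := coe_succAbove p0 j'
        have hvc : ((v0.succAbove (π' j') : Fin (N + 1)) : ℕ)
            = if ((π' j' : Fin N) : ℕ) < i r - 1 then ((π' j' : Fin N) : ℕ)
              else ((π' j' : Fin N) : ℕ) + 1 := coe_succAbove v0 _
        rw [hjc] at hj
        by_cases hc : (j' : ℕ) < r - 1
        · rw [if_pos hc] at hj
          have h2 := hval' j' (by omega)
          rw [show ((fun p => if p < r then i p - 1 else i (p + 1) - 1) ((j' : ℕ) + 1))
              = if (j' : ℕ) + 1 < r then i ((j' : ℕ) + 1) - 1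
                else i ((j' : ℕ) + 1 + 1) - 1 from rfl,
            if_pos (by omega : (j' : ℕ) + 1 < r)] at h2
          have hlow := (hi ((j' : ℕ) + 1) (by omega) (by omega) (by omega)).1
          rw [hvc, hjc, if_pos hc]
          rw [if_neg (by omega)]
          omega
        · rw [if_neg hc] at hj
          have h2 := hval' j' (by omega)
          rw [show ((fun p => if p < r then i p - 1 else i (p + 1) - 1) ((j' : ℕ) + 1))
              = if (j' : ℕ) + 1 < r then i ((j' : ℕ) + 1) - 1
                else i ((j' : ℕ) + 1 + 1) - 1 from rfl,
            if_neg (by omega : ¬ ((j' : ℕ) + 1 < r))] at h2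
          have hlow := (hi ((j' : ℕ) + 1 + 1) (by omega) (by omega) (by omega)).1
          rw [hvc, hjc, if_neg hc]
          rw [if_neg (by omega)]
          omega
  have hinv : Set.InvOn (insAt p0 v0) (delAt p0) S T := by
    constructor
    · rintro π ⟨hav, hval⟩
      apply insAt_delAt
      have h1 := hval p0 (by rw [hp0c]; omega)
      apply Fin.ext
      rw [hp0c, show r - 1 + 1 = r by omega] at h1
      rw [hv0c]
      omega
    · rintro π' _
      exact delAt_insAt p0 v0 π'
  have hbij : Set.BijOn (delAt p0) S T := hinv.bijOn hmapsF hmapsG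
  have hcard : S.ncard = T.ncard := by
    rw [← hbij.image_eq, Set.ncard_image_of_injOn hbij.injOn]
  simp only [gCount, Nat.add_sub_cancel]
  exact hcard
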